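/- Let λ ∈ ℂ be given and assume that c is not orthogonal to any eigenvector of the generalized eigenvalue problem −(B₁ + λB₂)v = ν B₃ v, i.e. for every ν ∈ ℂ and every nonzero v ∈ ℂᵐ with (B₁ + λB₂ + νB₃)v = 0 one has cᵀv ≠ 0. Suppose (μ, y) satisfies B(λ,μ)y = 0 with cᵀy = 1. Then the Jacobian J(λ,μ,y) is singular (not invertible) if and only if there exists a vector u ∈ ℂᵐ such that B(λ,μ)u + B₃y = 0 (i.e. there exists a Jordan chain of length at least two for this eigenpair). -/

import Mathlib

open Matrix

/-- **Singularity of the Jacobian and Jordan structure.**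
Let `λ ∈ ℂ` be given and assume `c` is not orthogonal to any eigenvector of the GEP
`−(B₁ + λB₂)v = ν B₃ v`.  Suppose `(μ, y)` satisfies `B(λ,μ)y = 0` with `cᵀy = 1`.  Then the
Jacobian `J(λ,μ,y)` is singular if and only if there exists `u` with `B(λ,μ)u + B₃y = 0`,
i.e. a Jordan chain of length at least two exists for the eigenpair `(μ, y)`. -/
theorem jacobian_singular_iff_jordan_chain
    (m : ℕ) (B₁ B₂ B₃ : Matrix (Fin m) (Fin m) ℂ) (c : Fin m → ℂ)
    (lam μ : ℂ) (y : Fin m → ℂ)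
    (horth : ∀ (ν : ℂ) (v : Fin m → ℂ), v ≠ 0 →
      (B₁ + lam • B₂ + ν • B₃) *ᵥ v = 0 → c ⬝ᵥ v ≠ 0)
    (hB : (B₁ + lam • B₂ + μ • B₃) *ᵥ y = 0)
    (hc : c ⬝ᵥ y = 1) :
    ¬ IsUnit (Matrix.fromBlocks (B₁ + lam • B₂ + μ • B₃)
        (Matrix.replicateCol (Fin 1) (B₃ *ᵥ y)) (Matrix.replicateRow (Fin 1) c) 0)
    ↔
    ∃ u : Fin m → ℂ, (B₁ + lam • B₂ + μ • B₃) *ᵥ u + B₃ *ᵥ y = 0 := by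
  set M := B₁ + lam • B₂ + μ • B₃ with hM
  set J := Matrix.fromBlocks M (Matrix.replicateCol (Fin 1) (B₃ *ᵥ y)) (Matrix.replicateRow (Fin 1) c) 0 with hJ
  have hsing : ¬ IsUnit J ↔ ∃ x : (Fin m ⊕ Fin 1) → ℂ, x ≠ 0 ∧ J *ᵥ x = 0 := by
    rw [Matrix.isUnit_iff_isUnit_det, isUnit_iff_ne_zero, not_not,
      ← Matrix.exists_mulVec_eq_zero_iff]
  rw [hsing]
  constructor
  · rintro ⟨x, hx0, hx⟩
    set v : Fin m → ℂ := x ∘ Sum.inl with hv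
    set t : ℂ := x (Sum.inr 0) with ht
    have hxe : x = Sum.elim v (fun _ => t) := by
      funext i; cases i with
      | inl i => rfl
      | inr i => simp [ht, Subsingleton.elim i 0]
    rw [hxe, hJ, Matrix.fromBlocks_mulVec] at hx
    simp only [Sum.elim_comp_inl, Sum.elim_comp_inr] at hx
    have h1 : M *ᵥ v + t • (B₃ *ᵥ y) = 0 := by
      have := congrFun hx
      have h := fun i => this (Sum.inl i)
      funext i
      have := h i
      simpa [Matrix.mulVec, dotProduct, Fin.sum_univ_one, mul_comm] using this
    have h2 : c ⬝ᵥ v = 0 := by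
      have := congrFun hx (Sum.inr 0)
      simpa [Matrix.mulVec, dotProduct] using this
    by_cases htz : t = 0
    · exfalso
      rw [htz] at h1
      simp only [zero_smul, add_zero] at h1
      by_cases hvz : v = 0
      · apply hx0
        rw [hxe, hvz]
        funext i; cases i <;> simp [htz]
      · exact horth μ v hvz h1 h2
    · refine ⟨t⁻¹ • v, ?_⟩
      have := congrArg (fun w => t⁻¹ • w) h1
      simpa [Matrix.mulVec_smul, smul_smul, inv_mul_cancel₀ htz, smul_add] using this
  · rintro ⟨u, hu⟩
    refine ⟨Sum.elim (u - (c ⬝ᵥ u) • y) (fun _ => 1), ?_, ?_⟩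
    · intro h
      have := congrFun h (Sum.inr 0)
      simpa using this
    · rw [hJ, Matrix.fromBlocks_mulVec]
      simp only [Sum.elim_comp_inl, Sum.elim_comp_inr]
      have h1 : M *ᵥ (u - (c ⬝ᵥ u) • y) + Matrix.replicateCol (Fin 1) (B₃ *ᵥ y) *ᵥ (fun _ => 1) = 0 := by
        have hcol : Matrix.replicateCol (Fin 1) (B₃ *ᵥ y) *ᵥ (fun _ => (1:ℂ)) = B₃ *ᵥ y := by
          funext i
          simp [Matrix.mulVec, dotProduct, Fin.sum_univ_one]
        rw [hcol, Matrix.mulVec_sub, Matrix.mulVec_smul, hB, smul_zero, sub_zero, hu]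
      have h2 : Matrix.replicateRow (Fin 1) c *ᵥ (u - (c ⬝ᵥ u) • y) = 0 := by
        funext i
        simp [Matrix.mulVec, Matrix.replicateRow, dotProduct_sub, dotProduct_smul, hc]
      rw [h1, h2]
      funext i; cases i <;> simp
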